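/- Suppose γ ≥ 0 is a real constant such that for every metric space (X,d), every nonempty finite set P ⊆ X, every integer k ≥ 1, every δ > 0, every δ-cover Q ⊆ P with k ≤ |Q|, and every valid farthest-first output C on Q with k centers, one has cost(C,P) ≤ 2·OPT(P,k) + γ·δ. Then γ ≥ 1. -/
import Mathlib


/-- `setDist s C` is the distance from the point `s` to the set `C`,
i.e. the infimum (for nonempty finite `C`, the minimum) of `dist s c` over `c ∈ C`. -/
noncomputable def setDist {X : Type*} [MetricSpace X] (s : X) (C : Set X) : ℝ :=
  sInf ((fun c => dist s c) '' C)

/-- `cost C S` is the supremum (for nonempty finite `S`, the maximum) over `s ∈ S`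
of the distance from `s` to the center set `C`. -/
noncomputable def cost {X : Type*} [MetricSpace X] (C S : Set X) : ℝ :=
  sSup ((fun s => setDist s C) '' S)

/-- `kOPT P k` is the optimal `k`-center cost on the finite set `P`. -/
noncomputable def kOPT {X : Type*} [MetricSpace X] (P : Finset X) (k : ℕ) : ℝ :=
  sInf { r : ℝ | ∃ C : Finset X, C ⊆ P ∧ C.card = k ∧ cost (C : Set X) (P : Set X) = r }

/-- `IsFF S k C` : `C` is a valid farthest-first output on `S` with `k` centers. -/
def IsFF {X : Type*} [MetricSpace X] (S : Finset X) (k : ℕ) (C : Finset X) : Prop :=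
  ∃ c : Fin k → X, Function.Injective c ∧ (∀ i, c i ∈ S) ∧
    (↑C : Set X) = Set.range c ∧
    ∀ i : Fin k, 0 < (i : ℕ) → ∀ s ∈ S,
      setDist s (c '' {j | j < i}) ≤ setDist (c i) (c '' {j | j < i})

lemma setDist_nonneg' {X : Type*} [MetricSpace X] (s : X) (C : Set X) : 0 ≤ setDist s C :=
  Real.sInf_nonneg (by rintro _ ⟨c, _, rfl⟩; exact dist_nonneg)

lemma setDist_le' {X : Type*} [MetricSpace X] (s : X) (C : Set X) (c : X) (hc : c ∈ C) :
    setDist s C ≤ dist s c :=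
  csInf_le ⟨0, by rintro _ ⟨c', _, rfl⟩; exact dist_nonneg⟩ ⟨c, hc, rfl⟩

lemma le_setDist' {X : Type*} [MetricSpace X] (s : X) (C : Set X) (hC : C.Nonempty) (r : ℝ)
    (h : ∀ c ∈ C, r ≤ dist s c) : r ≤ setDist s C :=
  le_csInf (hC.image _) (by rintro _ ⟨c, hc, rfl⟩; exact h c hc)

lemma cost_le' {X : Type*} [MetricSpace X] (C S : Set X) (hS : S.Nonempty) (r : ℝ)
    (h : ∀ s ∈ S, setDist s C ≤ r) : cost C S ≤ r :=
  csSup_le (hS.image _) (by rintro _ ⟨s, hs, rfl⟩; exact h s hs)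

lemma le_cost' {X : Type*} [MetricSpace X] (C S : Set X) (hS : S.Finite) (s : X) (hs : s ∈ S) :
    setDist s C ≤ cost C S :=
  le_csSup (hS.image _).bddAbove ⟨s, hs, rfl⟩

/-- If a constant `γ ≥ 0` satisfies the universal bound
`cost(FF(Q),P) ≤ 2·OPT(P,k) + γ·δ` over all metric spaces, nonempty finite sets `P`,
integers `k ≥ 1`, reals `δ > 0`, `δ`-covers `Q ⊆ P` with `k ≤ |Q|`, and valid
farthest-first outputs `C` on `Q` with `k` centers, then `γ ≥ 1`. -/
theorem stmt_4 (γ : ℝ) (hγ : 0 ≤ γ)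
    (H : ∀ (X : Type) [MetricSpace X] (P Q C : Finset X) (k : ℕ) (δ : ℝ),
      P.Nonempty → 1 ≤ k → 0 < δ → Q ⊆ P →
      (∀ p ∈ P, ∃ q ∈ Q, dist p q ≤ δ) → k ≤ Q.card →
      IsFF Q k C → cost (C : Set X) (P : Set X) ≤ 2 * kOPT P k + γ * δ) :
    1 ≤ γ := by
  by_contra hlt
  push_neg at hlt
  set ε : ℝ := (1 - γ) / 6 with hε
  have hε0 : 0 < ε := div_pos (by linarith) (by norm_num)
  have hε1 : ε < 1 := by simp only [hε]; linarith
  set P : Finset ℝ := {0, ε, 1} with hP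
  set Q : Finset ℝ := {0, ε} with hQ
  have hQP : Q ⊆ P := by
    intro x hx
    simp only [hQ, hP, Finset.mem_insert, Finset.mem_singleton] at hx ⊢
    tauto
  have h0P : (0 : ℝ) ∈ P := by simp [hP]
  have h1P : (1 : ℝ) ∈ P := by simp [hP]
  have hεP : ε ∈ P := by simp [hP]
  have hQcard : Q.card = 2 := by
    rw [hQ, Finset.card_insert_of_notMem (by simp [hε0.ne]), Finset.card_singleton]
  have hcover : ∀ p ∈ P, ∃ q ∈ Q, dist p q ≤ (1 : ℝ) := by
    intro p hp
    refine ⟨0, by simp [hQ], ?_⟩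
    simp only [hP, Finset.mem_insert, Finset.mem_singleton] at hp
    rcases hp with rfl | rfl | rfl <;>
      simp [Real.dist_eq, abs_of_nonneg, hε0.le, hε1.le]
  -- FF certificate
  have hFF : IsFF Q 2 Q := by
    refine ⟨![0, ε], ?_, ?_, ?_, ?_⟩
    · intro i j hij
      fin_cases i <;> fin_cases j <;> simp_all <;>
        exact absurd hij (by simpa using hε0.ne')
    · intro i; fin_cases i <;> simp [hQ]
    · ext x
      simp only [hQ, Finset.coe_insert, Finset.coe_singleton, Set.mem_insert_iff,
        Set.mem_singleton_iff, Set.mem_range, Fin.exists_fin_two]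
      simp only [Matrix.cons_val_zero, Matrix.cons_val_one, Matrix.head_cons]
      tauto
    · intro i hi s hs
      have hi1 : i = 1 := Fin.ext (by have := i.isLt; omega)
      subst hi1
      have himg : (![0, ε] '' {j | j < (1 : Fin 2)}) = {(0 : ℝ)} := by
        ext x
        constructor
        · rintro ⟨j, hj, rfl⟩
          have hj' : (j : ℕ) < 1 := hj
          have : j = 0 := Fin.ext (by simpa using Nat.lt_one_iff.mp hj')
          subst this; simp
        · rintro rfl
          exact ⟨0, by simp [Fin.lt_def], by simp⟩
      rw [himg]
      have hsd : ∀ t : ℝ, setDist t ({(0:ℝ)} : Set ℝ) = |t| := by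
        intro t
        have : ((fun c => dist t c) '' {(0:ℝ)}) = {|t|} := by
          simp [Real.dist_eq]
        rw [setDist, this, csInf_singleton]
      rw [hsd, hsd]
      simp only [hQ, Finset.mem_insert, Finset.mem_singleton] at hs
      rcases hs with rfl | rfl <;> simp [abs_of_nonneg, hε0.le]
  have key := H ℝ P Q Q 2 1 ⟨0, h0P⟩ (by norm_num) one_pos hQP hcover (by omega) hFF
  -- lower bound on cost
  have hQne : ((0:ℝ)) ∈ (Q : Set ℝ) := by simp [hQ]
  have hcost_lb : 1 - ε ≤ cost (Q : Set ℝ) (P : Set ℝ) := by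
    have h1 : 1 - ε ≤ setDist (1 : ℝ) (Q : Set ℝ) := by
      apply le_setDist' _ _ ⟨0, hQne⟩
      intro c hc
      simp only [hQ, Finset.coe_insert, Finset.coe_singleton, Set.mem_insert_iff,
        Set.mem_singleton_iff] at hc
      rcases hc with rfl | rfl <;>
        rw [Real.dist_eq] <;> rw [abs_of_nonneg (by linarith)] <;> linarith
    exact le_trans h1 (le_cost' _ _ P.finite_toSet 1 (by exact_mod_cast h1P))
  -- upper bound on kOPT
  have hkopt : kOPT P 2 ≤ ε := by
    have hC'card : ({ε, 1} : Finset ℝ).card = 2 := by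
      rw [Finset.card_insert_of_notMem (by simp [hε1.ne]), Finset.card_singleton]
    have hC'sub : ({ε, 1} : Finset ℝ) ⊆ P := by
      intro x hx
      simp only [hP, Finset.mem_insert, Finset.mem_singleton] at hx ⊢
      tauto
    have hmem : cost (({ε, 1} : Finset ℝ) : Set ℝ) (P : Set ℝ) ∈
        { r : ℝ | ∃ C : Finset ℝ, C ⊆ P ∧ C.card = 2 ∧ cost (C : Set ℝ) (P : Set ℝ) = r } :=
      ⟨{ε, 1}, hC'sub, hC'card, rfl⟩
    have hbdd : BddBelow { r : ℝ | ∃ C : Finset ℝ, C ⊆ P ∧ C.card = 2 ∧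
        cost (C : Set ℝ) (P : Set ℝ) = r } := by
      refine ⟨0, ?_⟩
      rintro r ⟨C', _, _, rfl⟩
      exact le_trans (setDist_nonneg' 0 (C' : Set ℝ))
        (le_cost' _ _ P.finite_toSet 0 (by exact_mod_cast h0P))
    have hcost_ub : cost (({ε, 1} : Finset ℝ) : Set ℝ) (P : Set ℝ) ≤ ε := by
      apply cost_le' _ _ ⟨0, by exact_mod_cast h0P⟩
      intro s hs
      simp only [hP, Finset.coe_insert, Finset.coe_singleton, Set.mem_insert_iff,
        Set.mem_singleton_iff] at hs
      have hε' : ε ∈ (({ε, 1} : Finset ℝ) : Set ℝ) := by simp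
      have h1' : (1:ℝ) ∈ (({ε, 1} : Finset ℝ) : Set ℝ) := by simp
      rcases hs with rfl | rfl | rfl
      · refine le_trans (setDist_le' _ _ ε hε') ?_
        rw [Real.dist_eq, abs_of_nonpos (by linarith)]; linarith
      · refine le_trans (setDist_le' _ _ ε hε') ?_
        simp [hε0.le]
      · refine le_trans (setDist_le' _ _ 1 h1') ?_
        simp [hε0.le]
    calc kOPT P 2 ≤ _ := csInf_le hbdd hmem
      _ ≤ ε := hcost_ub
  have : 1 - ε ≤ 2 * ε + γ := by
    have := le_trans hcost_lb key
    linarith [hkopt]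
  simp only [hε] at this
  linarith
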